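/- For w ∈ W₀ the following are equivalent: (1) w(B₁) = B₁; (2) w(B₁) ⊆ R₁⁺; (3) ℓ(w s_α) > ℓ(w) for all α ∈ B₁ (where s_α is the reflection in α). -/

import Mathlib

open scoped Classical RealInnerProductSpace

/-- Context: `R` is a finite crystallographic root system in a real inner product
space `V`, with Weyl group `W` (generated by the reflections `s α`), positive
system `Rpos`, simple roots `B`; `B1 ⊆ B` and `R1` is the subroot system with
simple roots `B1`, with positive roots `R1 ∩ Rpos` and Weyl group `W1`. -/
theorem stmt_2
    {V : Type*} [NormedAddCommGroup V] [InnerProductSpace ℝ V]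
    (R : Finset V)
    (hR0 : ∀ α ∈ R, α ≠ 0)
    (hRcrys : ∀ α ∈ R, ∀ β ∈ R, ∃ n : ℤ, 2 * ⟪β, α⟫ / ⟪α, α⟫ = (n : ℝ))
    (hRred : ∀ α ∈ R, ∀ t : ℝ, t • α ∈ R → t = 1 ∨ t = -1)
    (s : V → (V ≃ₗᵢ[ℝ] V))
    (hs : ∀ α ∈ R, ∀ x : V, s α x = x - (2 * ⟪x, α⟫ / ⟪α, α⟫) • α)
    (hRs : ∀ α ∈ R, ∀ β ∈ R, s α β ∈ R)
    (W : Subgroup (V ≃ₗᵢ[ℝ] V))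
    (hW : W = Subgroup.closure {g | ∃ α ∈ R, g = s α})
    (Rpos : Finset V) (hRposSub : Rpos ⊆ R)
    (hRsplit : ∀ α ∈ R, (α ∈ Rpos ∨ -α ∈ Rpos) ∧ ¬(α ∈ Rpos ∧ -α ∈ Rpos))
    (B : Finset V) (hBsub : B ⊆ Rpos)
    (hBindep : LinearIndependent ℝ (Subtype.val : {x : V // x ∈ B} → V))
    (hBgen : ∀ α ∈ Rpos, ∃ c : V → ℕ, α = ∑ b ∈ B, (c b : ℝ) • b)
    (B1 : Finset V) (hB1B : B1 ⊆ B)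
    (R1 : Finset V)
    (hR1 : ∀ α, α ∈ R1 ↔ α ∈ R ∧ (α : V) ∈ Submodule.span ℝ (B1 : Set V))
    (w : V ≃ₗᵢ[ℝ] V) (hwW : w ∈ W)
    (hwR1 : Finset.image (fun α => w α) R1 = R1) :
    (Finset.image (fun α => w α) B1 = B1 ↔
        Finset.image (fun α => w α) B1 ⊆ R1 ∩ Rpos) ∧
    (Finset.image (fun α => w α) B1 = B1 ↔
        ∀ α ∈ B1, (Rpos.filter (fun β => -(w β) ∈ Rpos)).card <
          (Rpos.filter (fun β => -((w * s α) β) ∈ Rpos)).card) := by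
  classical
  have hBR : B ⊆ R := fun b hb => hRposSub (hBsub hb)
  have hB1R : B1 ⊆ R := fun b hb => hBR (hB1B hb)
  have hαα : ∀ α ∈ R, (⟪α, α⟫ : ℝ) ≠ 0 := fun α hα h =>
    hR0 α hα (inner_self_eq_zero.mp h)
  -- reflections are involutive
  have hsinv : ∀ α ∈ R, ∀ x : V, s α (s α x) = x := by
    intro α hα x
    have h0 := hαα α hα
    have key : ⟪x - (2 * ⟪x, α⟫ / ⟪α, α⟫) • α, α⟫ = -⟪x, α⟫ := by
      rw [inner_sub_left, real_inner_smul_left, div_mul_cancel₀ _ h0]; ring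
    rw [hs α hα x, hs α hα, key, sub_sub, ← add_smul]
    have hz : (2 * ⟪x, α⟫ / ⟪α, α⟫) + 2 * -⟪x, α⟫ / ⟪α, α⟫ = 0 := by
      field_simp
      ring
    rw [hz, zero_smul, sub_zero]
  have hnegα : ∀ α ∈ R, s α α = -α := by
    intro α hα
    have h0 := hαα α hα
    rw [hs α hα α, mul_div_assoc, div_self h0, mul_one]
    rw [two_smul]; abel
  have hss1 : ∀ α ∈ R, s α * s α = 1 := by
    intro α hα
    ext x
    exact hsinv α hα x
  have hsinvEq : ∀ α ∈ R, (s α)⁻¹ = s α := fun α hα =>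
    inv_eq_of_mul_eq_one_left (hss1 α hα)
  -- W preserves R
  have hWR : ∀ g ∈ W, ∀ β ∈ R, g β ∈ R := by
    have main : ∀ g ∈ W, (∀ β ∈ R, g β ∈ R) ∧ (∀ β ∈ R, g⁻¹ β ∈ R) := by
      intro g hg
      rw [hW] at hg
      induction hg using Subgroup.closure_induction with
      | mem x hx =>
        obtain ⟨α, hα, rfl⟩ := hx
        refine ⟨fun β hβ => hRs α hα β hβ, fun β hβ => ?_⟩
        rw [hsinvEq α hα]
        exact hRs α hα β hβ
      | one =>
        constructor <;> intro β hβ <;> simpa using hβ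
      | mul x y hx hy ihx ihy =>
        constructor
        · intro β hβ
          exact ihx.1 _ (ihy.1 β hβ)
        · intro β hβ
          rw [mul_inv_rev]
          exact ihy.2 _ (ihx.2 β hβ)
      | inv x hx ih =>
        refine ⟨ih.2, fun β hβ => ?_⟩
        rw [inv_inv]
        exact ih.1 β hβ
    exact fun g hg => (main g hg).1
  -- linear independence of B, unbundled
  have hindep' : ∀ f : V → ℝ, ∑ b ∈ B, f b • b = 0 → ∀ b ∈ B, f b = 0 := by
    intro f hsum b hb
    exact linearIndependent_iff'.mp hBindep Finset.univ (fun i => f i.1)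
      ((Finset.sum_coe_sort B (fun b => f b • b)).trans hsum) ⟨b, hb⟩ (Finset.mem_univ _)
  -- a simple reflection permutes the positive roots other than itself
  have hsimple : ∀ α ∈ B, ∀ β ∈ Rpos, β ≠ α → s α β ∈ Rpos ∧ s α β ≠ α := by
    intro α hαB β hβ hne
    have hαR : α ∈ R := hBR hαB
    have hβR : β ∈ R := hRposSub hβ
    have hsβR : s α β ∈ R := hRs α hαR β hβR
    have h1 : s α β ∈ Rpos := by
      by_contra hneg
      have hneg' : -(s α β) ∈ Rpos := ((hRsplit _ hsβR).1).resolve_left hneg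
      obtain ⟨c, hc⟩ := hBgen β hβ
      obtain ⟨d, hd⟩ := hBgen _ hneg'
      set k := 2 * ⟪β, α⟫ / ⟪α, α⟫ with hk
      have hsb : s α β = β - k • α := hs α hαR β
      have hzero : ∑ b ∈ B, (((c b : ℝ) + (d b : ℝ)) - (if b = α then k else 0)) • b = 0 := by
        have e1 : ∀ b : V, (((c b : ℝ) + (d b : ℝ)) - (if b = α then k else 0)) • b
            = ((c b : ℝ) • b + (d b : ℝ) • b) - (if b = α then k • b else 0 • b) := by
          intro b
          split_ifs <;> module
        simp only [e1, zero_smul]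
        rw [Finset.sum_sub_distrib, Finset.sum_add_distrib,
          Finset.sum_ite_eq' B α (fun b => k • b), if_pos hαB, ← hc, ← hd, hsb]
        abel
      have hcoef := hindep' _ hzero
      have hcb : ∀ b ∈ B, b ≠ α → c b = 0 := by
        intro b hb hbne
        have h2 := hcoef b hb
        rw [if_neg hbne, sub_zero] at h2
        have h3 : (0:ℝ) ≤ (c b : ℝ) := Nat.cast_nonneg _
        have h4 : (0:ℝ) ≤ (d b : ℝ) := Nat.cast_nonneg _
        have h5 : (c b : ℝ) = 0 := by linarith
        exact_mod_cast h5
      have hβα : β = (c α : ℝ) • α := by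
        rw [hc, Finset.sum_eq_single_of_mem α hαB]
        intro b hb hbne
        simp [hcb b hb hbne]
      have hred := hRred α hαR (c α) (by rw [← hβα]; exact hβR)
      have hca : (c α : ℝ) = 1 := by
        rcases hred with h | h
        · exact h
        · exfalso
          have := Nat.cast_nonneg (α := ℝ) (c α)
          linarith
      exact hne (by rw [hβα, hca, one_smul])
    refine ⟨h1, fun hEq => ?_⟩
    have h2 : β = s α α := by
      have h3 : s α (s α β) = s α α := by rw [hEq]
      rw [hsinv α hαR] at h3
      exact h3
    rw [hnegα α hαR] at h2
    exact (hRsplit α hαR).2 ⟨hBsub hαB, h2 ▸ hβ⟩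
  have hwR : ∀ β ∈ R, w β ∈ R := hWR w hwW
  -- the length lemma
  have hlen : ∀ α ∈ B1,
      ((Rpos.filter (fun β => -(w β) ∈ Rpos)).card <
        (Rpos.filter (fun β => -((w * s α) β) ∈ Rpos)).card ↔ w α ∈ Rpos) := by
    intro α hα1
    have hαB : α ∈ B := hB1B hα1
    have hαR : α ∈ R := hBR hαB
    have hαpos : α ∈ Rpos := hBsub hαB
    have hwαR : w α ∈ R := hwR α hαR
    have hM : ((Rpos.erase α).filter (fun β => -((w * s α) β) ∈ Rpos)).card
        = ((Rpos.erase α).filter (fun β => -(w β) ∈ Rpos)).card := by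
      apply Finset.card_bij' (fun β _ => s α β) (fun β _ => s α β)
      · intro β hβ
        rw [Finset.mem_filter, Finset.mem_erase] at hβ ⊢
        obtain ⟨⟨hne, hpos⟩, hq⟩ := hβ
        obtain ⟨h1, h2⟩ := hsimple α hαB β hpos hne
        exact ⟨⟨h2, h1⟩, hq⟩
      · intro β hβ
        rw [Finset.mem_filter, Finset.mem_erase] at hβ ⊢
        obtain ⟨⟨hne, hpos⟩, hp⟩ := hβ
        obtain ⟨h1, h2⟩ := hsimple α hαB β hpos hne
        refine ⟨⟨h2, h1⟩, ?_⟩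
        show -(w (s α (s α β))) ∈ Rpos
        rw [hsinv α hαR]
        exact hp
      · intro β _
        exact hsinv α hαR β
      · intro β _
        exact hsinv α hαR β
    by_cases hwα : w α ∈ Rpos
    · have hα1' : α ∉ Rpos.filter (fun β => -(w β) ∈ Rpos) := by
        rw [Finset.mem_filter]
        rintro ⟨-, h⟩
        exact (hRsplit _ hwαR).2 ⟨hwα, h⟩
      have hα2' : α ∈ Rpos.filter (fun β => -((w * s α) β) ∈ Rpos) := by
        rw [Finset.mem_filter]
        refine ⟨hαpos, ?_⟩
        show -(w (s α α)) ∈ Rpos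
        rw [hnegα α hαR, map_neg, neg_neg]
        exact hwα
      have e1 : ((Rpos.erase α).filter (fun β => -(w β) ∈ Rpos)).card
          = (Rpos.filter (fun β => -(w β) ∈ Rpos)).card := by
        rw [Finset.filter_erase, Finset.erase_eq_of_notMem hα1']
      have e2 : ((Rpos.erase α).filter (fun β => -((w * s α) β) ∈ Rpos)).card + 1
          = (Rpos.filter (fun β => -((w * s α) β) ∈ Rpos)).card := by
        rw [Finset.filter_erase]
        exact Finset.card_erase_add_one hα2'
      exact iff_of_true (by omega) hwα
    · have hnwα : -(w α) ∈ Rpos := ((hRsplit _ hwαR).1).resolve_left hwα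
      have hα1' : α ∈ Rpos.filter (fun β => -(w β) ∈ Rpos) :=
        Finset.mem_filter.mpr ⟨hαpos, hnwα⟩
      have hα2' : α ∉ Rpos.filter (fun β => -((w * s α) β) ∈ Rpos) := by
        rw [Finset.mem_filter]
        rintro ⟨-, h⟩
        apply hwα
        have h' : -(w (s α α)) ∈ Rpos := h
        rw [hnegα α hαR, map_neg, neg_neg] at h'
        exact h'
      have e1 : ((Rpos.erase α).filter (fun β => -(w β) ∈ Rpos)).card + 1
          = (Rpos.filter (fun β => -(w β) ∈ Rpos)).card := by
        rw [Finset.filter_erase]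
        exact Finset.card_erase_add_one hα1'
      have e2 : ((Rpos.erase α).filter (fun β => -((w * s α) β) ∈ Rpos)).card
          = (Rpos.filter (fun β => -((w * s α) β) ∈ Rpos)).card := by
        rw [Finset.filter_erase, Finset.erase_eq_of_notMem hα2']
      exact iff_of_false (by omega) hwα
  -- the height functional
  obtain ⟨ht, hht⟩ : ∃ ht : V →ₗ[ℝ] ℝ, ∀ x ∈ B, ht x = if x ∈ B1 then 1 else 0 := by
    have hBi : LinearIndepOn ℝ id (B : Set V) := hBindep
    let bas := Module.Basis.extend hBi
    refine ⟨bas.constr ℝ (fun i => if (i : V) ∈ B1 then (1:ℝ) else 0), ?_⟩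
    intro x hx
    have hxe : x ∈ hBi.extend (Set.subset_univ _) := hBi.subset_extend _ (by exact hx)
    have hb : bas ⟨x, hxe⟩ = x := Module.Basis.extend_apply_self hBi ⟨x, hxe⟩
    have h2 := Module.Basis.constr_basis bas ℝ (fun i => if (i : V) ∈ B1 then (1:ℝ) else 0) ⟨x, hxe⟩
    rw [hb] at h2
    exact h2
  have hfilterB1 : B.filter (fun b => b ∈ B1) = B1 := by
    ext b
    simp only [Finset.mem_filter]
    exact ⟨fun h => h.2, fun h => ⟨hB1B h, h⟩⟩
  -- positive roots of R1 are nonneg combinations of B1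
  have hcoord : ∀ γ ∈ R1, γ ∈ Rpos → ∃ c : V → ℕ, γ = ∑ b ∈ B1, (c b : ℝ) • b := by
    intro γ hγ1 hγp
    obtain ⟨c, hc⟩ := hBgen γ hγp
    obtain ⟨d, -, hd⟩ := Submodule.mem_span_finset.mp ((hR1 γ).mp hγ1).2
    have hzero : ∑ b ∈ B, ((c b : ℝ) - (if b ∈ B1 then d b else 0)) • b = 0 := by
      have e1 : ∀ b : V, ((c b : ℝ) - (if b ∈ B1 then d b else 0)) • b
          = (c b : ℝ) • b - (if b ∈ B1 then d b • b else 0) := by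
        intro b
        rw [sub_smul, ite_smul, zero_smul]
      simp only [e1]
      rw [Finset.sum_sub_distrib, ← Finset.sum_filter, hfilterB1, hd, ← hc, sub_self]
    have hcoef := hindep' _ hzero
    refine ⟨c, ?_⟩
    rw [hc]
    refine (Finset.sum_subset hB1B ?_).symm
    intro b hb hb1
    have h2 := hcoef b hb
    rw [if_neg hb1, sub_zero] at h2
    have h3 : c b = 0 := by exact_mod_cast h2
    simp [h3]
  have hht1 : ∀ b ∈ B1, ht b = 1 := fun b hb => by
    rw [hht b (hB1B hb), if_pos hb]
  have hhtval : ∀ γ : V, ∀ c : V → ℕ, γ = ∑ b ∈ B1, (c b : ℝ) • b →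
      ht γ = ∑ b ∈ B1, (c b : ℝ) := by
    intro γ c hc
    rw [hc, map_sum]
    refine Finset.sum_congr rfl fun b hb => ?_
    rw [map_smul, hht1 b hb, smul_eq_mul, mul_one]
  have htpos : ∀ γ ∈ R1, γ ∈ Rpos → 1 ≤ ht γ := by
    intro γ h1 h2
    obtain ⟨c, hc⟩ := hcoord γ h1 h2
    rw [hhtval γ c hc]
    have hne : γ ≠ 0 := hR0 γ (hRposSub h2)
    have hns : ∑ b ∈ B1, c b ≠ 0 := by
      intro h0
      apply hne
      rw [hc]
      refine Finset.sum_eq_zero fun b hb => ?_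
      have := Finset.sum_eq_zero_iff.mp h0 b hb
      simp [this]
    have h1le : 1 ≤ ∑ b ∈ B1, c b := Nat.one_le_iff_ne_zero.mpr hns
    calc (1:ℝ) = ((1:ℕ):ℝ) := by norm_num
    _ ≤ ((∑ b ∈ B1, c b : ℕ) : ℝ) := by exact_mod_cast h1le
    _ = ∑ b ∈ B1, (c b : ℝ) := by push_cast; ring
  have hhtnonneg : ∀ γ ∈ Rpos, 0 ≤ ht γ := by
    intro γ hγ
    obtain ⟨c, hc⟩ := hBgen γ hγ
    rw [hc, map_sum]
    refine Finset.sum_nonneg fun b hb => ?_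
    rw [map_smul, smul_eq_mul, hht b hb]
    split_ifs <;> simp [Nat.cast_nonneg]
  have hB1S : ∀ b ∈ B1, b ∈ R1 ∧ b ∈ Rpos := by
    intro b hb
    exact ⟨(hR1 b).mpr ⟨hB1R hb, Submodule.subset_span (Finset.mem_coe.mpr hb)⟩,
      hBsub (hB1B hb)⟩
  -- the key implication: w(B1) ⊆ R1⁺ → w(B1) = B1
  have hkey : Finset.image (fun α => w α) B1 ⊆ R1 ∩ Rpos →
      Finset.image (fun α => w α) B1 = B1 := by
    intro himg
    have hwb : ∀ b ∈ B1, w b ∈ R1 ∧ w b ∈ Rpos := by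
      intro b hb
      have := himg (Finset.mem_image_of_mem _ hb)
      rwa [Finset.mem_inter] at this
    have hwR1' : ∀ γ ∈ R1, w γ ∈ R1 := by
      intro γ hγ
      rw [← hwR1]
      exact Finset.mem_image_of_mem _ hγ
    set S : Finset V := R1 ∩ Rpos with hS
    have hmemS : ∀ γ : V, γ ∈ S ↔ γ ∈ R1 ∧ γ ∈ Rpos := fun γ => Finset.mem_inter
    have hstep : ∀ γ ∈ S, w γ ∈ S ∧ ht γ ≤ ht (w γ) := by
      intro γ hγ
      rw [hmemS] at hγ
      obtain ⟨c, hc⟩ := hcoord γ hγ.1 hγ.2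
      have hwγ : w γ = ∑ b ∈ B1, (c b : ℝ) • (w b) := by
        rw [hc]
        simp [map_sum, map_smul]
      have hle : ∑ b ∈ B1, (c b : ℝ) ≤ ht (w γ) := by
        rw [hwγ, map_sum]
        refine Finset.sum_le_sum fun b hb => ?_
        rw [map_smul, smul_eq_mul]
        have h1 : 1 ≤ ht (w b) := htpos _ (hwb b hb).1 (hwb b hb).2
        nlinarith [Nat.cast_nonneg (α := ℝ) (c b)]
      have h1le : (1:ℝ) ≤ ∑ b ∈ B1, (c b : ℝ) := by
        have := htpos γ hγ.1 hγ.2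
        rwa [hhtval γ c hc] at this
      have hwγ1 : w γ ∈ R1 := hwR1' γ hγ.1
      have hwγpos : w γ ∈ Rpos := by
        by_contra hneg
        have hwγR : w γ ∈ R := ((hR1 _).mp hwγ1).1
        have h2 : -(w γ) ∈ Rpos := ((hRsplit _ hwγR).1).resolve_left hneg
        have h3 : 0 ≤ ht (-(w γ)) := hhtnonneg _ h2
        rw [map_neg] at h3
        linarith
      exact ⟨(hmemS _).mpr ⟨hwγ1, hwγpos⟩, by rw [hhtval γ c hc]; linarith⟩
    have himgS : Finset.image (fun α => w α) S = S := by
      apply Finset.eq_of_subset_of_card_le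
      · intro x hx
        obtain ⟨γ, hγ, rfl⟩ := Finset.mem_image.mp hx
        exact (hstep γ hγ).1
      · rw [Finset.card_image_of_injective S w.injective]
    have hsumeq : ∑ γ ∈ S, ht γ = ∑ γ ∈ S, ht (w γ) := by
      have h := Finset.sum_image (s := S) (f := fun x => ht x) (g := fun α => w α)
        (fun x _ y _ h => w.injective h)
      rw [himgS] at h
      exact h
    have heq : ∀ γ ∈ S, ht γ = ht (w γ) :=
      (Finset.sum_eq_sum_iff_of_le (fun γ hγ => (hstep γ hγ).2)).mp hsumeq
    have hwbB1 : ∀ b ∈ B1, w b ∈ B1 := by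
      intro b hb
      have hbS : b ∈ S := (hmemS b).mpr (hB1S b hb)
      have h1 : ht (w b) = 1 := by
        rw [← heq b hbS, hht b (hB1B hb), if_pos hb]
      obtain ⟨c, hc⟩ := hcoord _ (hwb b hb).1 (hwb b hb).2
      have hsum1 : ∑ b' ∈ B1, c b' = 1 := by
        have h2 := hhtval _ c hc
        rw [h1] at h2
        have h3 : ((∑ b' ∈ B1, c b' : ℕ) : ℝ) = 1 := by push_cast; linarith
        exact_mod_cast h3
      have hex : ∃ b' ∈ B1, c b' ≠ 0 := by
        by_contra h
        push_neg at h
        rw [Finset.sum_eq_zero (fun x hx => h x hx)] at hsum1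
        exact absurd hsum1 (by norm_num)
      obtain ⟨b', hb', hcb0⟩ := hex
      have hcb1 : c b' = 1 := by
        have hle : c b' ≤ 1 := hsum1 ▸ Finset.single_le_sum (fun _ _ => Nat.zero_le _) hb'
        omega
      have hrest : ∀ b'' ∈ B1, b'' ≠ b' → c b'' = 0 := by
        intro b'' hb'' hne
        have h2 : c b' + ∑ x ∈ B1.erase b', c x = 1 := by
          rw [Finset.add_sum_erase _ _ hb']
          exact hsum1
        have h3 : ∑ x ∈ B1.erase b', c x = 0 := by omega
        exact Finset.sum_eq_zero_iff.mp h3 b'' (Finset.mem_erase.mpr ⟨hne, hb''⟩)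
      have hwbeq : w b = b' := by
        rw [hc, Finset.sum_eq_single_of_mem b' hb']
        · simp [hcb1]
        · intro x hx hne
          simp [hrest x hx hne]
      rw [hwbeq]
      exact hb'
    apply Finset.eq_of_subset_of_card_le
    · intro x hx
      obtain ⟨b, hb, rfl⟩ := Finset.mem_image.mp hx
      exact hwbB1 b hb
    · rw [Finset.card_image_of_injective B1 w.injective]
  have hfwd : Finset.image (fun α => w α) B1 = B1 →
      Finset.image (fun α => w α) B1 ⊆ R1 ∩ Rpos := by
    intro h
    rw [h]
    intro b hb
    exact Finset.mem_inter.mpr (hB1S b hb)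
  refine ⟨⟨hfwd, hkey⟩, ?_, ?_⟩
  · intro h α hα
    rw [hlen α hα]
    have hmem : w α ∈ B1 := by
      rw [← h]
      exact Finset.mem_image_of_mem _ hα
    exact hBsub (hB1B hmem)
  · intro h
    apply hkey
    intro x hx
    obtain ⟨α, hα, rfl⟩ := Finset.mem_image.mp hx
    rw [Finset.mem_inter]
    constructor
    · rw [← hwR1]
      exact Finset.mem_image_of_mem _ (hB1S α hα).1
    · exact (hlen α hα).mp (h α hα)
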